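/- arXiv:2207.11183 — 2 statements merged into one kernel-verified Lean document; each statement's English description precedes it below -/
import Mathlib

section
/- Let r ≥ 1 and for each j ∈ ZMod(2r+1) define the diagonal (2r+1)×(2r+1) complex matrix Π_j = Σ_{t=0}^{r−1} |jr⊕t⟩⟨jr⊕t|, where ⊕ denotes addition modulo 2r+1 and |m⟩⟨m| is the diagonal matrix with a single 1 in position (m,m). Then each Π_j is an orthogonal projection of rank r, Π_j·Π_{j⊕1} = 0 for every j (so (Π_j) is a rank-r projective representation of the cycle graph C_{2r+1} in dimension 2r+1), and Σ_{j∈ZMod(2r+1)} Π_j = r·𝟙. -/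
open scoped Classical ComplexOrder Kronecker
noncomputable section

/-- The cycle graph on `ZMod n`, where `j` is adjacent to `j ± 1`. -/
def cycGraph (n : ℕ) : SimpleGraph (ZMod n) where
  Adj j k := j ≠ k ∧ (k = j + 1 ∨ j = k + 1)
  symm := ⟨fun _ _ h => ⟨h.1.symm, h.2.symm⟩⟩
  loopless := ⟨fun _ h => h.1 rfl⟩

/-- The diagonal indicator function of the block for vertex `j`. -/
def dfun (r : ℕ) (j m : ZMod (2 * r + 1)) : ℂ :=
  if ∃ t ∈ Finset.range r,
      (j * (r : ZMod (2 * r + 1)) + (t : ZMod (2 * r + 1))) = m then 1 else 0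

lemma natCast_inj_zmod {n : ℕ} [NeZero n] {a b : ℕ} (ha : a < n) (hb : b < n)
    (h : (a : ZMod n) = b) : a = b := by
  have := congrArg ZMod.val h
  rwa [ZMod.val_cast_of_lt ha, ZMod.val_cast_of_lt hb] at this

lemma dfun_zero_or_one (r : ℕ) (j m : ZMod (2 * r + 1)) :
    dfun r j m = 0 ∨ dfun r j m = 1 := by
  unfold dfun; split <;> simp

lemma P_eq_diagonal (r : ℕ) (j : ZMod (2 * r + 1)) :
    (∑ t ∈ Finset.range r,
      Matrix.single (j * (r : ZMod (2 * r + 1)) + (t : ZMod (2 * r + 1)))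
        (j * (r : ZMod (2 * r + 1)) + (t : ZMod (2 * r + 1))) (1 : ℂ))
      = Matrix.diagonal (dfun r j) := by
  have hinj : ∀ s ∈ Finset.range r, ∀ t ∈ Finset.range r,
      (j * (r : ZMod (2 * r + 1)) + (s : ZMod (2 * r + 1))) =
        (j * (r : ZMod (2 * r + 1)) + (t : ZMod (2 * r + 1))) → s = t := by
    intro s hs t ht h
    have h' : ((s : ℕ) : ZMod (2 * r + 1)) = t := by
      exact add_left_cancel h
    exact natCast_inj_zmod (by simp at hs; omega) (by simp at ht; omega) h'
  ext i i'
  rw [Matrix.sum_apply]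
  by_cases hii : i = i'
  · subst hii
    rw [Matrix.diagonal_apply_eq]
    unfold dfun
    by_cases hm : ∃ t ∈ Finset.range r,
        (j * (r : ZMod (2 * r + 1)) + (t : ZMod (2 * r + 1))) = i
    · obtain ⟨t, ht, htm⟩ := hm
      rw [if_pos ⟨t, ht, htm⟩, Finset.sum_eq_single_of_mem t ht]
      · simp [Matrix.single, htm]
      · intro s hs hst
        simp only [Matrix.single, Matrix.of_apply, ite_eq_right_iff, and_imp]
        intro hsi _
        exact absurd (hinj s hs t ht (hsi.trans htm.symm)) hst
    · rw [if_neg hm]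
      apply Finset.sum_eq_zero
      intro s hs
      simp only [Matrix.single, Matrix.of_apply, ite_eq_right_iff, and_imp]
      intro hsi _
      exact absurd ⟨s, hs, hsi⟩ hm
  · rw [Matrix.diagonal_apply_ne _ hii]
    apply Finset.sum_eq_zero
    intro s hs
    simp only [Matrix.single, Matrix.of_apply, ite_eq_right_iff, and_imp]
    intro h1 h2
    exact absurd (h1.symm.trans h2) hii

lemma two_r_cast (r : ℕ) : (r : ZMod (2 * r + 1)) * (-2) = 1 := by
  have h : ((2 * r + 1 : ℕ) : ZMod (2 * r + 1)) = 0 := ZMod.natCast_self _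
  push_cast at h
  linear_combination -h

theorem cycle_rank_r_PR (r : ℕ) (hr : 1 ≤ r)
    (P : ZMod (2 * r + 1) → Matrix (ZMod (2 * r + 1)) (ZMod (2 * r + 1)) ℂ)
    (hdef : ∀ j, P j = ∑ t ∈ Finset.range r,
      Matrix.single (j * (r : ZMod (2 * r + 1)) + (t : ZMod (2 * r + 1)))
        (j * (r : ZMod (2 * r + 1)) + (t : ZMod (2 * r + 1))) (1 : ℂ)) :
    (∀ j, (P j).IsHermitian) ∧ (∀ j, P j * P j = P j) ∧
    (∀ j, (P j).rank = r) ∧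
    (∀ j, P j * P (j + 1) = 0) ∧
    (∀ j k, (cycGraph (2 * r + 1)).Adj j k → P j * P k = 0) ∧
    ∑ j, P j = (r : ℂ) • (1 : Matrix (ZMod (2 * r + 1)) (ZMod (2 * r + 1)) ℂ) := by
  have hP : ∀ j, P j = Matrix.diagonal (dfun r j) := fun j => by
    rw [hdef j, P_eq_diagonal]
  -- Hermitian
  have hherm : ∀ j, (P j).IsHermitian := by
    intro j
    rw [hP j]
    unfold Matrix.IsHermitian
    rw [Matrix.diagonal_conjTranspose]
    refine congrArg Matrix.diagonal ?_
    funext m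
    rcases dfun_zero_or_one r j m with h | h <;> simp [Pi.star_apply, h]
  -- Idempotent
  have hidem : ∀ j, P j * P j = P j := by
    intro j
    rw [hP j, Matrix.diagonal_mul_diagonal]
    refine congrArg Matrix.diagonal ?_
    funext m
    rcases dfun_zero_or_one r j m with h | h <;> simp [h]
  -- disjoint supports of consecutive projections
  have hdisj : ∀ j, P j * P (j + 1) = 0 := by
    intro j
    rw [hP j, hP (j + 1), Matrix.diagonal_mul_diagonal]
    have : (fun m => dfun r j m * dfun r (j + 1) m) = fun _ => (0 : ℂ) := by
      funext m
      by_contra hne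
      have h1 : dfun r j m ≠ 0 := fun h => hne (by simp [h])
      have h2 : dfun r (j + 1) m ≠ 0 := fun h => hne (by simp [h])
      unfold dfun at h1 h2
      rw [ite_ne_right_iff] at h1 h2
      obtain ⟨⟨t, ht, htm⟩, -⟩ := h1
      obtain ⟨⟨s, hs, hsm⟩, -⟩ := h2
      simp only [Finset.mem_range] at ht hs
      have key : ((t : ℕ) : ZMod (2 * r + 1)) = ((r + s : ℕ) : ZMod (2 * r + 1)) := by
        have := htm.trans hsm.symm
        push_cast at this ⊢
        linear_combination this
      have := natCast_inj_zmod (by omega) (by omega) key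
      omega
    rw [this, Matrix.diagonal_zero]
  -- rank
  have hrank : ∀ j, (P j).rank = r := by
    intro j
    rw [hP j, Matrix.rank_diagonal]
    have himg : Finset.univ.filter (fun m => dfun r j m ≠ 0)
        = (Finset.range r).image
            (fun t : ℕ => j * (r : ZMod (2 * r + 1)) + (t : ZMod (2 * r + 1))) := by
      ext m
      simp only [Finset.mem_filter, Finset.mem_univ, true_and, Finset.mem_image]
      unfold dfun
      rw [ite_ne_right_iff]
      constructor
      · rintro ⟨⟨t, ht, htm⟩, -⟩; exact ⟨t, ht, htm⟩
      · rintro ⟨t, ht, htm⟩; exact ⟨⟨t, ht, htm⟩, one_ne_zero⟩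
    rw [Fintype.card_subtype, himg, Finset.card_image_of_injOn, Finset.card_range]
    intro s hs t ht h
    have h' : ((s : ℕ) : ZMod (2 * r + 1)) = t := add_left_cancel h
    simp only [Finset.coe_range, Set.mem_Iio] at hs ht
    exact natCast_inj_zmod (by omega) (by omega) h'
  -- adjacency
  have hadj : ∀ j k, (cycGraph (2 * r + 1)).Adj j k → P j * P k = 0 := by
    rintro j k ⟨hne, hjk⟩
    rcases hjk with h | h
    · rw [h]; exact hdisj j
    · have hcomm : P j * P k = P k * P j := by
        rw [hP j, hP k, Matrix.diagonal_mul_diagonal, Matrix.diagonal_mul_diagonal]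
        exact congrArg Matrix.diagonal (funext fun m => mul_comm _ _)
      rw [hcomm, h]
      exact hdisj k
  refine ⟨hherm, hidem, hrank, hdisj, hadj, ?_⟩
  -- the sum
  have hu : (r : ZMod (2 * r + 1)) * (-2) = 1 := two_r_cast r
  have hsum : ∀ t : ℕ, ∑ j : ZMod (2 * r + 1),
      Matrix.single (j * (r : ZMod (2 * r + 1)) + (t : ZMod (2 * r + 1)))
        (j * (r : ZMod (2 * r + 1)) + (t : ZMod (2 * r + 1))) (1 : ℂ)
      = (1 : Matrix (ZMod (2 * r + 1)) (ZMod (2 * r + 1)) ℂ) := by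
    intro t
    have hbij : Function.Bijective
        (fun j : ZMod (2 * r + 1) => j * (r : ZMod (2 * r + 1)) + (t : ZMod (2 * r + 1))) := by
      constructor
      · intro a b h
        simp only at h
        linear_combination (-2 : ZMod (2 * r + 1)) * h + (b - a) * hu
      · intro m
        refine ⟨(m - (t : ZMod (2 * r + 1))) * (-2), ?_⟩
        simp only
        linear_combination (m - (t : ZMod (2 * r + 1))) * hu
    rw [Fintype.sum_bijective _ hbij
      (fun j => Matrix.single (j * (r : ZMod (2 * r + 1)) + (t : ZMod (2 * r + 1)))
        (j * (r : ZMod (2 * r + 1)) + (t : ZMod (2 * r + 1))) (1 : ℂ))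
      (fun m => Matrix.single m m (1 : ℂ)) (fun j => rfl)]
    ext i i'
    rw [Matrix.sum_apply]
    by_cases hii : i = i'
    · subst hii
      rw [Matrix.one_apply_eq, Finset.sum_eq_single_of_mem i (Finset.mem_univ i)]
      · simp [Matrix.single]
      · intro m _ hmi
        simp only [Matrix.single, Matrix.of_apply, ite_eq_right_iff, and_imp]
        exact fun h _ => absurd h hmi
    · rw [Matrix.one_apply_ne hii]
      apply Finset.sum_eq_zero
      intro m _
      simp only [Matrix.single, Matrix.of_apply, ite_eq_right_iff, and_imp]
      intro h1 h2
      exact absurd (h1.symm.trans h2) hii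
  calc ∑ j, P j = ∑ j : ZMod (2 * r + 1), ∑ t ∈ Finset.range r,
        Matrix.single (j * (r : ZMod (2 * r + 1)) + (t : ZMod (2 * r + 1)))
          (j * (r : ZMod (2 * r + 1)) + (t : ZMod (2 * r + 1))) (1 : ℂ) := by
        exact Finset.sum_congr rfl fun j _ => hdef j
    _ = ∑ t ∈ Finset.range r, ∑ j : ZMod (2 * r + 1),
        Matrix.single (j * (r : ZMod (2 * r + 1)) + (t : ZMod (2 * r + 1)))
          (j * (r : ZMod (2 * r + 1)) + (t : ZMod (2 * r + 1))) (1 : ℂ) :=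
        Finset.sum_comm
    _ = ∑ _t ∈ Finset.range r, (1 : Matrix (ZMod (2 * r + 1)) (ZMod (2 * r + 1)) ℂ) :=
        Finset.sum_congr rfl fun t _ => hsum t
    _ = (r : ℂ) • 1 := by
        rw [Finset.sum_const, Finset.card_range, Nat.cast_smul_eq_nsmul]
end
end

section
/- For every integer r ≥ 2, the fractional chromatic number of AR(r) equals (3r−1)/r = 3 − 1/r. -/
open scoped Classical ComplexOrder Kronecker
noncomputable section

/-- A set of vertices is independent if it is pairwise non-adjacent. -/
def IsIndep {α : Type*} (G : SimpleGraph α) (S : Set α) : Prop :=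
  S.Pairwise fun a b => ¬ G.Adj a b

/-- The finset of all independent finsets of vertices of `G`. -/
def indepFinsets {α : Type*} [Fintype α] (G : SimpleGraph α) : Finset (Finset α) :=
  Finset.univ.filter fun I => IsIndep G ↑I

/-- A fractional coloring for weights `w`: a nonnegative value on each independent
set such that, for each vertex, the total value of the independent sets containing
it is at least its weight. -/
def IsFracColoring {α : Type*} [Fintype α] (G : SimpleGraph α) (w : α → ℝ)
    (z : Finset α → ℝ) : Prop :=
  (∀ I, 0 ≤ z I) ∧
    ∀ v, w v ≤ ∑ I ∈ (indepFinsets G).filter (fun I => v ∈ I), z I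

/-- The weighted fractional chromatic number. -/
def fracChromW {α : Type*} [Fintype α] (G : SimpleGraph α) (w : α → ℝ) : ℝ :=
  sInf {x | ∃ z : Finset α → ℝ, IsFracColoring G w z ∧ x = ∑ I ∈ indepFinsets G, z I}

/-- The (unweighted) fractional chromatic number. -/
def fracChrom {α : Type*} [Fintype α] (G : SimpleGraph α) : ℝ :=
  fracChromW G fun _ => 1

/-- The circulant graph `AR r` on `ZMod (3r-1)`: `j` and `k` are adjacent iff
`j - k ≡ ±s (mod 3r-1)` for some `s ∈ {r, …, 2r-1}`. -/
def AR (r : ℕ) : SimpleGraph (ZMod (3 * r - 1)) where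
  Adj j k := j ≠ k ∧ ∃ s : ℕ, r ≤ s ∧ s ≤ 2 * r - 1 ∧
    (j - k = (s : ZMod (3 * r - 1)) ∨ k - j = (s : ZMod (3 * r - 1)))
  symm := by
    constructor
    rintro j k ⟨h1, s, hs1, hs2, h3⟩
    exact ⟨h1.symm, s, hs1, hs2, h3.symm⟩
  loopless := by constructor; rintro j ⟨h1, -⟩; exact h1 rfl

section AuxAR
variable (r : ℕ) [NeZero (3 * r - 1)]

lemma AR_adj_iff (hr : 2 ≤ r) (a b : ZMod (3 * r - 1)) :
    (AR r).Adj a b ↔ a ≠ b ∧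
      ((r ≤ (a - b).val ∧ (a - b).val ≤ 2 * r - 1) ∨
       (r ≤ (b - a).val ∧ (b - a).val ≤ 2 * r - 1)) := by
  constructor
  · rintro ⟨hne, s, hs1, hs2, h | h⟩
    · have : (a - b).val = s := by rw [h, ZMod.val_cast_of_lt (by omega)]
      exact ⟨hne, Or.inl (by omega)⟩
    · have : (b - a).val = s := by rw [h, ZMod.val_cast_of_lt (by omega)]
      exact ⟨hne, Or.inr (by omega)⟩
  · rintro ⟨hne, h | h⟩
    · exact ⟨hne, (a - b).val, h.1, h.2, Or.inl (by simp [ZMod.natCast_val, ZMod.cast_id])⟩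
    · exact ⟨hne, (b - a).val, h.1, h.2, Or.inr (by simp [ZMod.natCast_val, ZMod.cast_id])⟩

lemma indep_card_le (hr : 2 ≤ r) (I : Finset (ZMod (3 * r - 1)))
    (hI : IsIndep (AR r) ↑I) : I.card ≤ r := by
  rcases I.eq_empty_or_nonempty with rfl | ⟨v, hv⟩
  · simp
  have hval : ∀ u ∈ I, (u - v).val < r ∨ 2 * r ≤ (u - v).val := by
    intro u hu
    by_cases h : u = v
    · subst h; simp [ZMod.val_zero]; omega
    · have hnadj : ¬ (AR r).Adj u v := hI hu hv h
      rw [AR_adj_iff r hr] at hnadj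
      push_neg at hnadj
      have h2 := hnadj h
      have hlt : (u - v).val < 3 * r - 1 := ZMod.val_lt _
      omega
  classical
  have hcard := Finset.card_le_card_of_injOn
    (f := fun u => if (u - v).val < r then (u - v).val else (u - v).val - (2 * r - 1))
    (s := I) (t := Finset.range r) ?_ ?_
  · simpa using hcard
  · intro u hu
    rcases hval u hu with h | h
    · simp [h]
    · have hlt : (u - v).val < 3 * r - 1 := ZMod.val_lt _
      simp only [Finset.mem_coe, Finset.mem_range]
      rw [if_neg (by omega)]
      omega
  · intro u hu u' hu' hfe
    dsimp only at hfe
    by_contra hne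
    have hd : (u - v) = (((u - v).val : ℕ) : ZMod (3 * r - 1)) := by
      simp [ZMod.natCast_val, ZMod.cast_id]
    have hd' : (u' - v) = (((u' - v).val : ℕ) : ZMod (3 * r - 1)) := by
      simp [ZMod.natCast_val, ZMod.cast_id]
    rcases hval u hu with h1 | h1 <;> rcases hval u' hu' with h2 | h2
    · rw [if_pos h1, if_pos h2] at hfe
      exact hne (by have := ZMod.val_injective _ hfe; rwa [sub_left_inj] at this)
    · -- u in A, u' in B : adjacency between u' and u
      rw [if_pos h1, if_neg (by omega)] at hfe
      have hsub : (u' - v).val - (u - v).val = 2 * r - 1 := by omega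
      have hle : (u - v).val ≤ (u' - v).val := by omega
      have : u' - u = (((u' - v).val - (u - v).val : ℕ) : ZMod (3 * r - 1)) := by
        rw [Nat.cast_sub hle, ← hd, ← hd']; ring
      have hadj : (AR r).Adj u' u :=
        ⟨fun he => hne he.symm, 2 * r - 1, by omega, le_refl _, Or.inl (by rw [this, hsub])⟩
      exact hI hu' hu (fun he => hne he.symm) hadj
    · rw [if_neg (by omega), if_pos h2] at hfe
      have hsub : (u - v).val - (u' - v).val = 2 * r - 1 := by omega
      have hle : (u' - v).val ≤ (u - v).val := by omega
      have : u - u' = (((u - v).val - (u' - v).val : ℕ) : ZMod (3 * r - 1)) := by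
        rw [Nat.cast_sub hle, ← hd, ← hd']; ring
      have hadj : (AR r).Adj u u' :=
        ⟨hne, 2 * r - 1, by omega, le_refl _, Or.inl (by rw [this, hsub])⟩
      exact hI hu hu' hne hadj
    · rw [if_neg (by omega), if_neg (by omega)] at hfe
      have : (u - v).val = (u' - v).val := by omega
      exact hne (by have := ZMod.val_injective _ this; rwa [sub_left_inj] at this)

def arc (j : ZMod (3 * r - 1)) : Finset (ZMod (3 * r - 1)) :=
  (Finset.range r).image fun i : ℕ => j + (i : ZMod (3 * r - 1))

lemma natCast_inj_lt (hr : 2 ≤ r) {i i' : ℕ} (hi : i < r) (hi' : i' < r)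
    (h : (i : ZMod (3 * r - 1)) = (i' : ZMod (3 * r - 1))) : i = i' := by
  have := congrArg ZMod.val h
  rwa [ZMod.val_cast_of_lt (by omega), ZMod.val_cast_of_lt (by omega)] at this

lemma arc_card (hr : 2 ≤ r) (j : ZMod (3 * r - 1)) : (arc r j).card = r := by
  rw [arc, Finset.card_image_of_injOn, Finset.card_range]
  intro i hi i' hi' h
  simp only [Finset.mem_coe, Finset.mem_range] at hi hi'
  exact natCast_inj_lt r hr hi hi' (by exact add_left_cancel h)

lemma diff_val (hr : 2 ≤ r) {i i' : ℕ} (hi : i < r) (hi' : i' < r) :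
    ((i : ZMod (3 * r - 1)) - (i' : ZMod (3 * r - 1))).val < r ∨
    2 * r ≤ ((i : ZMod (3 * r - 1)) - (i' : ZMod (3 * r - 1))).val := by
  rcases le_or_gt i' i with h | h
  · left
    rw [← Nat.cast_sub h, ZMod.val_cast_of_lt (by omega)]
    omega
  · right
    have he : (i : ZMod (3 * r - 1)) - (i' : ZMod (3 * r - 1))
        = ((3 * r - 1 - (i' - i) : ℕ) : ZMod (3 * r - 1)) := by
      rw [Nat.cast_sub (show i' - i ≤ 3 * r - 1 by omega), ZMod.natCast_self, zero_sub,
        Nat.cast_sub h.le]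
      ring
    rw [he, ZMod.val_cast_of_lt (by omega)]
    omega

lemma arc_indep (hr : 2 ≤ r) (j : ZMod (3 * r - 1)) : IsIndep (AR r) ↑(arc r j) := by
  intro a ha b hb hne
  simp only [Finset.coe_image, Set.mem_image, Finset.mem_coe, Finset.mem_range, arc,
    Finset.coe_range, Set.mem_Iio] at ha hb
  obtain ⟨i, hi, rfl⟩ := ha
  obtain ⟨i', hi', rfl⟩ := hb
  rw [AR_adj_iff r hr]
  rintro ⟨-, h | h⟩
  · have hdv := diff_val r hr hi hi'
    have : (j + (i : ZMod (3 * r - 1))) - (j + (i' : ZMod (3 * r - 1)))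
        = (i : ZMod (3 * r - 1)) - (i' : ZMod (3 * r - 1)) := by ring
    rw [this] at h
    omega
  · have hdv := diff_val r hr hi' hi
    have : (j + (i' : ZMod (3 * r - 1))) - (j + (i : ZMod (3 * r - 1)))
        = (i' : ZMod (3 * r - 1)) - (i : ZMod (3 * r - 1)) := by ring
    rw [this] at h
    omega

lemma card_mem_arc (hr : 2 ≤ r) (v : ZMod (3 * r - 1)) :
    (Finset.univ.filter fun j => v ∈ arc r j).card = r := by
  classical
  have he : (Finset.univ.filter fun j => v ∈ arc r j)
      = (Finset.range r).image fun i : ℕ => v - (i : ZMod (3 * r - 1)) := by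
    ext j
    simp only [Finset.mem_filter, Finset.mem_univ, true_and, arc, Finset.mem_image,
      Finset.mem_range]
    constructor
    · rintro ⟨i, hi, h⟩
      exact ⟨i, hi, by rw [← h]; ring⟩
    · rintro ⟨i, hi, rfl⟩
      exact ⟨i, hi, by ring⟩
  rw [he, Finset.card_image_of_injOn, Finset.card_range]
  intro i hi i' hi' h
  simp only [Finset.mem_coe, Finset.mem_range] at hi hi'
  have : (i : ZMod (3 * r - 1)) = (i' : ZMod (3 * r - 1)) := by
    have := sub_right_injective h  -- might not exist; fix below
    exact this
  exact natCast_inj_lt r hr hi hi' this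

end AuxAR

lemma filter_inst_eq {α : Type*} (s : Finset α) (p : α → Prop) (h1 h2 : DecidablePred p) :
    @Finset.filter α p h1 s = @Finset.filter α p h2 s := by
  congr!

theorem AR_fracChrom (r : ℕ) (hr : 2 ≤ r) [NeZero (3 * r - 1)] :
    fracChrom (AR r) = (3 * (r : ℝ) - 1) / r := by
  classical
  have hrpos : (0 : ℝ) < r := by
    have : 0 < r := by omega
    exact_mod_cast this
  set z : Finset (ZMod (3 * r - 1)) → ℝ :=
    fun I => ((Finset.univ.filter fun j => arc r j = I).card : ℝ) / r with hz
  -- total sum of z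
  have totsum : ∑ I ∈ indepFinsets (AR r), z I = ((3 * r - 1 : ℕ) : ℝ) / r := by
    rw [hz, ← Finset.sum_div]
    congr 1
    rw [← Nat.cast_sum]
    congr 1
    have := Finset.card_eq_sum_card_fiberwise
      (f := fun j : ZMod (3 * r - 1) => arc r j) (s := Finset.univ)
      (t := indepFinsets (AR r))
      (fun j _ => by
        simp only [indepFinsets, Finset.mem_coe, Finset.mem_filter, Finset.mem_univ, true_and]
        exact arc_indep r hr j)
    rw [← this]
    simp [ZMod.card]
  have vertsum : ∀ v, ∑ I ∈ (indepFinsets (AR r)).filter (fun I => v ∈ I), z I = 1 := by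
    intro v
    rw [hz, ← Finset.sum_div, ← Nat.cast_sum]
    have hfib := Finset.card_eq_sum_card_fiberwise
      (f := fun j : ZMod (3 * r - 1) => arc r j)
      (s := Finset.univ.filter fun j => v ∈ arc r j)
      (t := (indepFinsets (AR r)).filter (fun I => v ∈ I))
      (fun j hj => by
        simp only [Finset.mem_coe, Finset.mem_filter, Finset.mem_univ, true_and] at hj ⊢
        refine ⟨?_, hj⟩
        simp only [indepFinsets, Finset.mem_filter, Finset.mem_univ, true_and]
        exact arc_indep r hr j)
    have hsame : ∀ I ∈ (indepFinsets (AR r)).filter (fun I => v ∈ I),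
        ((Finset.univ.filter fun j => v ∈ arc r j).filter fun j => arc r j = I).card
        = (Finset.univ.filter fun j => arc r j = I).card := by
      intro I hI
      congr 1
      ext j
      simp only [Finset.mem_filter, Finset.mem_univ, true_and]
      constructor
      · rintro ⟨-, h⟩; exact h
      · rintro rfl
        simp only [Finset.mem_filter] at hI
        exact ⟨hI.2, rfl⟩
    rw [Finset.sum_congr rfl hsame] at hfib
    rw [← hfib, card_mem_arc r hr v]
    field_simp
  have hmem : (3 * (r : ℝ) - 1) / r ∈
      {x | ∃ z' : Finset (ZMod (3 * r - 1)) → ℝ, IsFracColoring (AR r) (fun _ => 1) z' ∧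
        x = ∑ I ∈ indepFinsets (AR r), z' I} := by
    refine ⟨z, ⟨fun I => by positivity, fun v => (vertsum v).ge.trans (le_of_eq (Finset.sum_congr (filter_inst_eq _ _ _ _) fun _ _ => rfl))⟩, ?_⟩
    rw [totsum]
    congr 1
    push_cast [Nat.cast_sub (show 1 ≤ 3 * r by omega)]
    ring
  have hlb : ∀ x ∈ {x | ∃ z' : Finset (ZMod (3 * r - 1)) → ℝ,
      IsFracColoring (AR r) (fun _ => 1) z' ∧ x = ∑ I ∈ indepFinsets (AR r), z' I},
      (3 * (r : ℝ) - 1) / r ≤ x := by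
    rintro x ⟨z', ⟨hnn, hvert⟩, rfl⟩
    have hvert' : ∀ v : ZMod (3 * r - 1),
        (1 : ℝ) ≤ ∑ I ∈ (indepFinsets (AR r)).filter (fun I => v ∈ I), z' I :=
      fun v => (hvert v).trans (le_of_eq (Finset.sum_congr (filter_inst_eq _ _ _ _) fun _ _ => rfl))
    have h1 : ((3 * r - 1 : ℕ) : ℝ) ≤
        ∑ v : ZMod (3 * r - 1), ∑ I ∈ (indepFinsets (AR r)).filter (fun I => v ∈ I), z' I := by
      calc ((3 * r - 1 : ℕ) : ℝ) = ∑ _v : ZMod (3 * r - 1), (1 : ℝ) := by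
            simp [ZMod.card]
        _ ≤ _ := Finset.sum_le_sum fun v _ => hvert' v
    have h2 : ∑ v : ZMod (3 * r - 1), ∑ I ∈ (indepFinsets (AR r)).filter (fun I => v ∈ I), z' I
        = ∑ I ∈ indepFinsets (AR r), (I.card : ℝ) * z' I := by
      have hv : ∀ v : ZMod (3 * r - 1),
          ∑ I ∈ (indepFinsets (AR r)).filter (fun I => v ∈ I), z' I
          = ∑ I ∈ indepFinsets (AR r), if v ∈ I then z' I else 0 :=
        fun v => Finset.sum_filter _ _
      rw [Finset.sum_congr rfl fun v _ => hv v, Finset.sum_comm]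
      refine Finset.sum_congr rfl fun I hI => ?_
      rw [Finset.sum_ite_mem, Finset.univ_inter, Finset.sum_const, nsmul_eq_mul]
    have h3 : ∑ I ∈ indepFinsets (AR r), (I.card : ℝ) * z' I
        ≤ ∑ I ∈ indepFinsets (AR r), (r : ℝ) * z' I := by
      refine Finset.sum_le_sum fun I hI => ?_
      have hind : IsIndep (AR r) ↑I := by
        simp only [indepFinsets, Finset.mem_filter] at hI
        exact hI.2
      have := indep_card_le r hr I hind
      exact mul_le_mul_of_nonneg_right (by exact_mod_cast this) (hnn I)
    rw [← Finset.mul_sum] at h3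
    have hcast : ((3 * r - 1 : ℕ) : ℝ) = 3 * (r : ℝ) - 1 := by
      push_cast [Nat.cast_sub (show 1 ≤ 3 * r by omega)]
      ring
    rw [div_le_iff₀ hrpos]
    rw [hcast, h2] at h1
    nlinarith [h1, h3]
  rw [fracChrom, fracChromW]
  refine le_antisymm (csInf_le ⟨0, ?_⟩ hmem) (le_csInf ⟨_, hmem⟩ hlb)
  rintro x ⟨z', ⟨hnn, -⟩, rfl⟩
  exact Finset.sum_nonneg fun I _ => hnn I
end
end
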